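/- Assume the density ratio model (G_0, …, G_m Borel probability measures on ℝ; q : ℝ → ℝ^d Borel measurable; θ_0 = 0, θ_1, …, θ_m ∈ ℝ^d; G_k with density exp(θ_kᵀ q(·)) with respect to G_0; ρ_0, …, ρ_m > 0, Σ ρ_k = 1; h = Σ_k ρ_k exp(θ_kᵀ q), h_k = ρ_k exp(θ_kᵀ q)/h; Ḡ = Σ_k ρ_k G_k; ∫ ‖q‖² dḠ < ∞), with a_{rs}(x) = ∫_{(−∞,x]} (δ_{rs} h_r − h_r h_s) dḠ, B_r(x) ∈ ℝ^{md} the block vector with sth block ∫_{(−∞,x]} (δ_{rs} h_r − h_r h_s) q dḠ, and W the md × md block matrix with blocks W_{rs} = ∫ (δ_{rs} h_r − h_r h_s) q qᵀ dḠ, assumed invertible. Fix 0 ≤ r, s ≤ m, reals ξ_r, ξ_s, and positive reals g_r, g_s (the density values of G_r at ξ_r and of G_s at ξ_s). Then the 2 × 2 matrix with (1,1) entry [a_{rr}(ξ_r) − B_r(ξ_r)ᵀ W^{-1} B_r(ξ_r)]/(ρ_r² g_r²), (2,2) entry [a_{ss}(ξ_s) − B_s(ξ_s)ᵀ W^{-1}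 B_s(ξ_s)]/(ρ_s² g_s²), and off-diagonal entries [a_{rs}(min{ξ_r, ξ_s}) − B_r(ξ_r)ᵀ W^{-1} B_s(ξ_s)]/(ρ_r ρ_s g_r g_s) is positive semidefinite. -/

import Mathlib

open MeasureTheory

/-- Cauchy–Schwarz for a convex combination. -/
lemma drm_cs_sum {n : ℕ} (h w : Fin n → ℝ) (hh : ∀ k, 0 ≤ h k) (hsum : ∑ k, h k = 1) :
    (∑ k, h k * w k) ^ 2 ≤ ∑ k, h k * w k ^ 2 := by
  have := Finset.sum_mul_sq_le_sq_mul_sq Finset.univ (fun k => Real.sqrt (h k))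
    (fun k => Real.sqrt (h k) * w k)
  calc (∑ k, h k * w k) ^ 2 = (∑ k, Real.sqrt (h k) * (Real.sqrt (h k) * w k)) ^ 2 := by
        congr 1; apply Finset.sum_congr rfl; intro k _
        rw [← mul_assoc, Real.mul_self_sqrt (hh k)]
    _ ≤ (∑ k, Real.sqrt (h k) ^ 2) * ∑ k, (Real.sqrt (h k) * w k) ^ 2 := this
    _ = ∑ k, h k * w k ^ 2 := by
        have e1 : ∑ k, Real.sqrt (h k) ^ 2 = 1 := by
          rw [← hsum]; apply Finset.sum_congr rfl; intro k _; exact Real.sq_sqrt (hh k)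
        rw [e1, one_mul]; apply Finset.sum_congr rfl; intro k _
        rw [mul_pow, Real.sq_sqrt (hh k)]

/-- The multinomial covariance quadratic form is nonnegative. -/
lemma drm_quadform_nonneg {n : ℕ} (H : Fin n → ℝ) (hH : ∀ k, 0 ≤ H k)
    (hsum : ∑ k, H k = 1) (w : Fin n → ℝ) :
    0 ≤ ∑ k, ∑ l, ((if k = l then H k else 0) - H k * H l) * (w k * w l) := by
  have hcs := drm_cs_sum H w hH hsum
  have expand : ∑ k, ∑ l, ((if k = l then H k else 0) - H k * H l) * (w k * w l)
      = ∑ k, H k * w k ^ 2 - (∑ k, H k * w k) ^ 2 := by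
    have e1 : ∀ k : Fin n, ∑ l, ((if k = l then H k else 0) - H k * H l) * (w k * w l)
        = H k * w k ^ 2 - ∑ l, (H k * w k) * (H l * w l) := by
      intro k
      simp only [sub_mul, ite_mul, zero_mul, Finset.sum_sub_distrib,
        Finset.sum_ite_eq, Finset.mem_univ, if_true]
      congr 1
      · ring
      · apply Finset.sum_congr rfl; intro l _; ring
    rw [Finset.sum_congr rfl fun k _ => e1 k, Finset.sum_sub_distrib]
    congr 1
    rw [sq, Finset.sum_mul_sum]
  rw [expand]
  nlinarith [hcs]

/-- Pointwise algebraic expansion of the quadratic form. -/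
lemma drm_ptwise {ι : Type*} [Fintype ι] {n : ℕ} (C : Fin (n+1) → Fin (n+1) → ℝ)
    (hC : ∀ k l, C k l = C l k) (r s : Fin (n+1)) (ar as_ : ℝ)
    (har : ar * ar = ar) (has : as_ * as_ = as_) (v0 v1 : ℝ) (u Qv : ι → ℝ)
    (emb : ι → Fin (n+1)) :
    ∑ k, ∑ l, C k l *
      ((v0 * (if k = r then ar else 0) + v1 * (if k = s then as_ else 0) +
          ∑ z, (if k = emb z then u z * Qv z else 0)) *
       (v0 * (if l = r then ar else 0) + v1 * (if l = s then as_ else 0) +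
          ∑ z, (if l = emb z then u z * Qv z else 0)))
    = v0 ^ 2 * (ar * C r r) + 2 * (v0 * v1) * ((ar * as_) * C r s) +
        v1 ^ 2 * (as_ * C s s) +
      2 * ∑ z, ((v0 * (ar * (C r (emb z) * Qv z)) + v1 * (as_ * (C s (emb z) * Qv z))) * u z) +
      ∑ z, ∑ z', u z * (C (emb z) (emb z') * (Qv z * Qv z')) * u z' := by
  classical
  set w : Fin (n+1) → ℝ := fun k =>
    v0 * (if k = r then ar else 0) + v1 * (if k = s then as_ else 0) +
      ∑ z, (if k = emb z then u z * Qv z else 0) with hw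
  set X : Fin (n+1) → ℝ := fun k =>
    v0 * ar * C k r + v1 * as_ * C k s + ∑ z, C k (emb z) * (u z * Qv z) with hX
  have inner : ∀ k, ∑ l, C k l * w l = X k := by
    intro k
    simp only [hw, mul_add, Finset.mul_sum, mul_ite, mul_zero, Finset.sum_add_distrib]
    rw [Finset.sum_comm (γ := Fin (n+1)) (s := Finset.univ) (t := Finset.univ)]
    simp only [Finset.sum_ite_eq', Finset.mem_univ, if_true, hX]
    ring_nf
  have step1 : ∀ k, ∑ l, C k l * (w k * w l) = w k * X k := by
    intro k
    rw [← inner k, Finset.mul_sum]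
    exact Finset.sum_congr rfl fun l _ => by ring
  have s2a : ∑ k, (v0 * (if k = r then ar else 0)) * X k = v0 * ar * X r := by
    simp only [mul_ite, mul_zero, ite_mul, zero_mul, Finset.sum_ite_eq',
      Finset.mem_univ, if_true]
  have s2b : ∑ k, (v1 * (if k = s then as_ else 0)) * X k = v1 * as_ * X s := by
    simp only [mul_ite, mul_zero, ite_mul, zero_mul, Finset.sum_ite_eq',
      Finset.mem_univ, if_true]
  have s2c : ∑ k, (∑ z, (if k = emb z then u z * Qv z else 0)) * X k
      = ∑ z, (u z * Qv z) * X (emb z) := by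
    simp only [Finset.sum_mul, ite_mul, zero_mul]
    rw [Finset.sum_comm (γ := Fin (n+1)) (s := Finset.univ) (t := Finset.univ)]
    simp only [Finset.sum_ite_eq', Finset.mem_univ, if_true]
  calc ∑ k, ∑ l, C k l * (w k * w l) = ∑ k, w k * X k :=
        Finset.sum_congr rfl fun k _ => step1 k
    _ = v0 * ar * X r + v1 * as_ * X s + ∑ z, (u z * Qv z) * X (emb z) := by
        simp only [hw, add_mul, Finset.sum_add_distrib]
        rw [s2a, s2b, s2c]
    _ = _ := by
        simp only [hX]
        have e3 : ∑ z, (u z * Qv z) *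
            (v0 * ar * C (emb z) r + v1 * as_ * C (emb z) s +
              ∑ z', C (emb z) (emb z') * (u z' * Qv z')) =
            ∑ z, ((u z * Qv z) * (v0 * ar * C r (emb z) + v1 * as_ * C s (emb z)) +
              ∑ z', u z * (C (emb z) (emb z') * (Qv z * Qv z'))* u z') := by
          refine Finset.sum_congr rfl fun z _ => ?_
          rw [hC (emb z) r, hC (emb z) s, mul_add, Finset.mul_sum]
          congr 1
          exact Finset.sum_congr rfl fun z' _ => by ring
        rw [e3, Finset.sum_add_distrib, hC s r]
        have e4 : v0 * ar * (v0 * ar * C r r + v1 * as_ * C r s + ∑ z, C r (emb z) * (u z * Qv z))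
            = v0 ^ 2 * (ar * C r r) + (v0 * v1) * ((ar * as_) * C r s)
              + ∑ z, v0 * ar * (C r (emb z) * (u z * Qv z)) := by
          rw [mul_add, Finset.mul_sum]
          linear_combination (v0 ^ 2 * C r r) * har
        have e5 : v1 * as_ * (v0 * ar * C r s + v1 * as_ * C s s + ∑ z, C s (emb z) * (u z * Qv z))
            = v1 ^ 2 * (as_ * C s s) + (v0 * v1) * ((ar * as_) * C r s)
              + ∑ z, v1 * as_ * (C s (emb z) * (u z * Qv z)) := by
          rw [mul_add, Finset.mul_sum]
          linear_combination (v1 ^ 2 * C s s) * has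
        rw [e4, e5]
        have e6 : 2 * ∑ z, ((v0 * (ar * (C r (emb z) * Qv z)) + v1 * (as_ * (C s (emb z) * Qv z))) * u z)
            = (∑ z, v0 * ar * (C r (emb z) * (u z * Qv z)) + ∑ z, v1 * as_ * (C s (emb z) * (u z * Qv z)))
              + ∑ z, (u z * Qv z) * (v0 * ar * C r (emb z) + v1 * as_ * C s (emb z)) := by
          rw [Finset.mul_sum, ← Finset.sum_add_distrib, ← Finset.sum_add_distrib]
          exact Finset.sum_congr rfl fun z _ => by ring
        rw [e6]; ring

/-- A `2 × 2` real matrix with a nonnegative quadratic form is positive semidefinite. -/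
lemma drm_psd2 (p q w : ℝ) (h : ∀ x y : ℝ, 0 ≤ p * x ^ 2 + 2 * q * (x * y) + w * y ^ 2) :
    Matrix.PosSemidef !![p, q; q, w] := by
  refine Matrix.posSemidef_iff_dotProduct_mulVec.mpr ⟨?_, ?_⟩
  · unfold Matrix.IsHermitian
    ext i j
    fin_cases i <;> fin_cases j <;> simp
  · intro x
    have := h (x 0) (x 1)
    simp [Matrix.mulVec, dotProduct, Fin.sum_univ_two]
    nlinarith [this]


set_option maxHeartbeats 1000000

/-- the difference `Σ_EM - Σ_EL` of the asymptotic covariance matrices of a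
pair of empirical quantiles and of empirical-likelihood quantiles (at points `ξ_r, ξ_s`
with density values `g_r, g_s > 0`) is positive semidefinite. -/
theorem drm_quantile_efficiency_posSemidef (m d : ℕ) (hm : 1 ≤ m) (hd : 1 ≤ d)
    (G : Fin (m + 1) → Measure ℝ) [∀ k, IsProbabilityMeasure (G k)]
    (q : ℝ → Fin d → ℝ) (hq : Measurable q)
    (θ : Fin (m + 1) → Fin d → ℝ) (hθ0 : θ 0 = 0)
    (hG : ∀ k, G k =
      (G 0).withDensity fun t => ENNReal.ofReal (Real.exp (∑ i, θ k i * q t i)))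
    (ρ : Fin (m + 1) → ℝ) (hρpos : ∀ k, 0 < ρ k) (hρsum : ∑ k, ρ k = 1)
    (hfun : Fin (m + 1) → ℝ → ℝ)
    (hhfun : ∀ k t, hfun k t =
      ρ k * Real.exp (∑ i, θ k i * q t i) /
        ∑ k', ρ k' * Real.exp (∑ i, θ k' i * q t i))
    (Gbar : Measure ℝ) (hGbar : Gbar = ∑ k, ENNReal.ofReal (ρ k) • G k)
    (hq2int : Integrable (fun t => ∑ i, (q t i) ^ 2) Gbar)
    (a : Fin (m + 1) → Fin (m + 1) → ℝ → ℝ)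
    (ha : ∀ (r s : Fin (m + 1)) (x : ℝ), a r s x =
      ∫ t in Set.Iic x, ((if r = s then hfun r t else 0) - hfun r t * hfun s t) ∂Gbar)
    (B : Fin (m + 1) → ℝ → Fin m × Fin d → ℝ)
    (hB : ∀ (r : Fin (m + 1)) (x : ℝ) (s : Fin m) (i : Fin d), B r x (s, i) =
      ∫ t in Set.Iic x,
        ((if r = s.succ then hfun r t else 0) - hfun r t * hfun s.succ t) * q t i ∂Gbar)
    (W : Matrix (Fin m × Fin d) (Fin m × Fin d) ℝ)
    (hW : ∀ (r s : Fin m) (i j : Fin d), W (r, i) (s, j) =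
      ∫ t, ((if r = s then hfun r.succ t else 0) - hfun r.succ t * hfun s.succ t) *
        (q t i * q t j) ∂Gbar)
    (hWinv : IsUnit W.det)
    (r s : Fin (m + 1)) (ξr ξs : ℝ) (gr gs : ℝ) (hgr : 0 < gr) (hgs : 0 < gs) :
    Matrix.PosSemidef
      !![(a r r ξr - ∑ c : Fin m × Fin d, B r ξr c * (W⁻¹).mulVec (B r ξr) c) /
          (ρ r ^ 2 * gr ^ 2),
        (a r s (min ξr ξs) - ∑ c : Fin m × Fin d, B r ξr c * (W⁻¹).mulVec (B s ξs) c) /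
          (ρ r * ρ s * gr * gs);
        (a r s (min ξr ξs) - ∑ c : Fin m × Fin d, B r ξr c * (W⁻¹).mulVec (B s ξs) c) /
          (ρ r * ρ s * gr * gs),
        (a s s ξs - ∑ c : Fin m × Fin d, B s ξs c * (W⁻¹).mulVec (B s ξs) c) /
          (ρ s ^ 2 * gs ^ 2)] := by
  classical
  -- Gbar is a finite measure
  haveI hGfin : IsFiniteMeasure Gbar := by
    constructor
    rw [hGbar]
    have e : (∑ k, ENNReal.ofReal (ρ k) • G k : Measure ℝ) Set.univ
        = ∑ k, ENNReal.ofReal (ρ k) := by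
      rw [Measure.finset_sum_apply]
      simp [Measure.smul_apply, measure_univ]
    rw [e]
    exact ENNReal.sum_lt_top.mpr fun k _ => ENNReal.ofReal_lt_top
  -- basic properties of the mixture weights
  have hden : ∀ t, 0 < ∑ k', ρ k' * Real.exp (∑ i, θ k' i * q t i) :=
    fun t => Finset.sum_pos (fun k _ => mul_pos (hρpos k) (Real.exp_pos _))
      ⟨0, Finset.mem_univ 0⟩
  have hfnn : ∀ k t, 0 ≤ hfun k t := by
    intro k t
    rw [hhfun]
    exact le_of_lt (div_pos (mul_pos (hρpos k) (Real.exp_pos _)) (hden t))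
  have hfsum : ∀ t, ∑ k, hfun k t = 1 := by
    intro t
    have e1 : ∑ k, hfun k t
        = ∑ k, ρ k * Real.exp (∑ i, θ k i * q t i) /
            ∑ k', ρ k' * Real.exp (∑ i, θ k' i * q t i) :=
      Finset.sum_congr rfl fun k _ => hhfun k t
    rw [e1, ← Finset.sum_div, div_self (hden t).ne']
  have hfle : ∀ k t, hfun k t ≤ 1 := by
    intro k t
    rw [← hfsum t]
    exact Finset.single_le_sum (fun l _ => hfnn l t) (Finset.mem_univ k)
  -- abbreviations
  set c : Fin (m + 1) → Fin (m + 1) → ℝ → ℝ :=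
    fun k l t => (if k = l then hfun k t else 0) - hfun k t * hfun l t with hc
  set ind : ℝ → ℝ → ℝ := fun ξ t => if t ≤ ξ then (1 : ℝ) else 0 with hind
  have hcsymm : ∀ k l t, c k l t = c l k t := by
    intro k l t
    by_cases h : k = l
    · subst h; rfl
    · simp only [hc, h, if_false, Ne.symm h]; ring
  have hcb : ∀ k l t, |c k l t| ≤ 1 := by
    intro k l t
    have h1 := hfnn k t; have h2 := hfle k t
    have h3 := hfnn l t; have h4 := hfle l t
    rw [abs_le]
    constructor <;> by_cases h : k = l <;> simp only [hc, h, if_true, if_false] <;> nlinarith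
  -- measurability
  have hqi : ∀ i, Measurable fun t => q t i := fun i => (measurable_pi_apply i).comp hq
  have hnum : ∀ k : Fin (m + 1),
      Measurable fun t => ρ k * Real.exp (∑ i, θ k i * q t i) := fun k =>
    measurable_const.mul (Real.measurable_exp.comp
      (Finset.measurable_sum _ fun i _ => measurable_const.mul (hqi i)))
  have hfm : ∀ k, Measurable (hfun k) := by
    intro k
    have hk : hfun k = fun t => ρ k * Real.exp (∑ i, θ k i * q t i) /
        ∑ k', ρ k' * Real.exp (∑ i, θ k' i * q t i) := funext fun t => hhfun k t
    rw [hk]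
    exact (hnum k).div (Finset.measurable_sum _ fun k' _ => hnum k')
  have hcm : ∀ k l, Measurable (c k l) := by
    intro k l
    have h1 : Measurable fun t => (if k = l then hfun k t else 0 : ℝ) := by
      by_cases h : k = l
      · simpa [h] using hfm k
      · simpa [h] using measurable_const
    exact h1.sub ((hfm k).mul (hfm l))
  have hindm : ∀ ξ : ℝ, Measurable (ind ξ) := by
    intro ξ
    simp only [hind]
    exact Measurable.ite measurableSet_Iic measurable_const measurable_const
  have hind01 : ∀ ξ t, ind ξ t * ind ξ t = ind ξ t := by
    intro ξ t; simp only [hind]; split_ifs <;> norm_num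
  have hindabs : ∀ ξ t, |ind ξ t| ≤ 1 := by
    intro ξ t; simp only [hind]; split_ifs <;> norm_num
  have hindmin : ∀ t, ind ξr t * ind ξs t = ind (min ξr ξs) t := by
    intro t
    simp only [hind, le_min_iff]
    by_cases h1 : t ≤ ξr <;> by_cases h2 : t ≤ ξs <;> simp [h1, h2]
  -- integrability
  have hqint : ∀ i, Integrable (fun t => q t i) Gbar := by
    intro i
    refine ((integrable_const (1 : ℝ)).add hq2int).mono'
      (hqi i).aestronglyMeasurable (ae_of_all _ fun t => ?_)
    rw [Real.norm_eq_abs]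
    have h1 : |q t i| ≤ 1 + q t i ^ 2 := by nlinarith [sq_abs (q t i), abs_nonneg (q t i)]
    have h2 : q t i ^ 2 ≤ ∑ j, q t j ^ 2 :=
      Finset.single_le_sum (f := fun j => q t j ^ 2) (fun j _ => sq_nonneg _) (Finset.mem_univ i)
    simpa [Pi.add_apply] using h1.trans (by linarith)
  have hqqi : ∀ i j, Integrable (fun t => q t i * q t j) Gbar := by
    intro i j
    refine hq2int.mono' ((hqi i).mul (hqi j)).aestronglyMeasurable (ae_of_all _ fun t => ?_)
    rw [Real.norm_eq_abs, abs_mul]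
    have h1 : q t i ^ 2 ≤ ∑ j', q t j' ^ 2 :=
      Finset.single_le_sum (f := fun j' => q t j' ^ 2) (fun j' _ => sq_nonneg _) (Finset.mem_univ i)
    have h2 : q t j ^ 2 ≤ ∑ j', q t j' ^ 2 :=
      Finset.single_le_sum (f := fun j' => q t j' ^ 2) (fun j' _ => sq_nonneg _) (Finset.mem_univ j)
    nlinarith [sq_abs (q t i), sq_abs (q t j), abs_nonneg (q t i), abs_nonneg (q t j),
      sq_nonneg (|q t i| - |q t j|)]
  have hintc : ∀ (k l : Fin (m + 1)) (x : ℝ),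
      Integrable (fun t => ind x t * c k l t) Gbar := by
    intro k l x
    refine (integrable_const (1 : ℝ)).mono'
      (((hindm x).mul (hcm k l)).aestronglyMeasurable) (ae_of_all _ fun t => ?_)
    rw [Real.norm_eq_abs, abs_mul]
    calc |ind x t| * |c k l t| ≤ 1 * 1 :=
          mul_le_mul (hindabs x t) (hcb k l t) (abs_nonneg _) zero_le_one
      _ = 1 := mul_one 1
  have hintmin : Integrable (fun t => ind ξr t * ind ξs t * c r s t) Gbar := by
    have e : (fun t => ind ξr t * ind ξs t * c r s t)
        = fun t => ind (min ξr ξs) t * c r s t := funext fun t => by rw [hindmin t]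
    rw [e]; exact hintc r s (min ξr ξs)
  have hintB : ∀ (k : Fin (m + 1)) (x : ℝ) (z : Fin m × Fin d),
      Integrable (fun t => ind x t * (c k z.1.succ t * q t z.2)) Gbar := by
    intro k x z
    refine (hqint z.2).abs.mono'
      (((hindm x).mul ((hcm k z.1.succ).mul (hqi z.2))).aestronglyMeasurable)
      (ae_of_all _ fun t => ?_)
    rw [Real.norm_eq_abs, abs_mul, abs_mul]
    calc |ind x t| * (|c k z.1.succ t| * |q t z.2|) ≤ 1 * (1 * |q t z.2|) := by
          apply mul_le_mul (hindabs x t) ?_ (by positivity) zero_le_one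
          exact mul_le_mul (hcb k z.1.succ t) le_rfl (abs_nonneg _) zero_le_one
      _ = |q t z.2| := by ring
  have hintW : ∀ z z' : Fin m × Fin d,
      Integrable (fun t => c z.1.succ z'.1.succ t * (q t z.2 * q t z'.2)) Gbar := by
    intro z z'
    refine (hqqi z.2 z'.2).abs.mono'
      (((hcm z.1.succ z'.1.succ).mul ((hqi z.2).mul (hqi z'.2))).aestronglyMeasurable)
      (ae_of_all _ fun t => ?_)
    rw [Real.norm_eq_abs, abs_mul]
    calc |c z.1.succ z'.1.succ t| * |q t z.2 * q t z'.2| ≤ 1 * |q t z.2 * q t z'.2| :=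
          mul_le_mul (hcb _ _ t) le_rfl (abs_nonneg _) zero_le_one
      _ = |q t z.2 * q t z'.2| := one_mul _
  -- integral representations over the whole line
  have hrep : ∀ (k l : Fin (m + 1)) (x : ℝ),
      a k l x = ∫ t, ind x t * c k l t ∂Gbar := by
    intro k l x
    rw [ha, ← integral_indicator measurableSet_Iic]
    congr 1; funext t
    by_cases h : t ≤ x
    · simp [Set.indicator_apply, Set.mem_Iic, h, hind, hc]
    · simp [Set.indicator_apply, Set.mem_Iic, h, hind]
  have hrepmin : a r s (min ξr ξs) = ∫ t, ind ξr t * ind ξs t * c r s t ∂Gbar := by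
    rw [hrep r s (min ξr ξs)]
    congr 1; funext t; rw [hindmin t]
  have hBrep : ∀ (k : Fin (m + 1)) (x : ℝ) (z : Fin m × Fin d),
      B k x z = ∫ t, ind x t * (c k z.1.succ t * q t z.2) ∂Gbar := by
    rintro k x ⟨zs, zi⟩
    rw [hB, ← integral_indicator measurableSet_Iic]
    congr 1; funext t
    by_cases h : t ≤ x
    · simp only [Set.indicator_apply, Set.mem_Iic, h, if_true, hind, hc]; ring
    · simp [Set.indicator_apply, Set.mem_Iic, h, hind]
  have hWrep : ∀ z z' : Fin m × Fin d,
      W z z' = ∫ t, c z.1.succ z'.1.succ t * (q t z.2 * q t z'.2) ∂Gbar := by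
    rintro ⟨zs, zi⟩ ⟨zs', zi'⟩
    rw [hW]
    congr 1; funext t
    simp only [hc, Fin.succ_inj]
  -- the key quadratic-form inequality
  have key : ∀ (v0 v1 : ℝ) (u : Fin m × Fin d → ℝ),
      0 ≤ v0 ^ 2 * a r r ξr + 2 * (v0 * v1) * a r s (min ξr ξs) + v1 ^ 2 * a s s ξs
        + 2 * ∑ z : Fin m × Fin d, ((v0 * B r ξr z + v1 * B s ξs z) * u z)
        + ∑ z : Fin m × Fin d, ∑ z' : Fin m × Fin d, u z * W z z' * u z' := by
    intro v0 v1 u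
    have I1 : Integrable (fun t => v0 ^ 2 * (ind ξr t * c r r t)) Gbar :=
      (hintc r r ξr).const_mul _
    have I2 : Integrable (fun t => 2 * (v0 * v1) * (ind ξr t * ind ξs t * c r s t)) Gbar :=
      hintmin.const_mul _
    have I3 : Integrable (fun t => v1 ^ 2 * (ind ξs t * c s s t)) Gbar :=
      (hintc s s ξs).const_mul _
    have I4z : ∀ z : Fin m × Fin d, Integrable (fun t =>
        (v0 * (ind ξr t * (c r z.1.succ t * q t z.2))
          + v1 * (ind ξs t * (c s z.1.succ t * q t z.2))) * u z) Gbar := fun z =>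
      (((hintB r ξr z).const_mul v0).add ((hintB s ξs z).const_mul v1)).mul_const _
    have I4 : Integrable (fun t => 2 * ∑ z : Fin m × Fin d,
        ((v0 * (ind ξr t * (c r z.1.succ t * q t z.2))
          + v1 * (ind ξs t * (c s z.1.succ t * q t z.2))) * u z)) Gbar :=
      (integrable_finset_sum _ fun z _ => I4z z).const_mul 2
    have I5zz : ∀ z z' : Fin m × Fin d, Integrable (fun t =>
        u z * (c z.1.succ z'.1.succ t * (q t z.2 * q t z'.2)) * u z') Gbar := fun z z' =>
      ((hintW z z').const_mul (u z)).mul_const (u z')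
    have I5z : ∀ z : Fin m × Fin d, Integrable (fun t => ∑ z' : Fin m × Fin d,
        u z * (c z.1.succ z'.1.succ t * (q t z.2 * q t z'.2)) * u z') Gbar := fun z =>
      integrable_finset_sum _ fun z' _ => I5zz z z'
    have I5 : Integrable (fun t => ∑ z : Fin m × Fin d, ∑ z' : Fin m × Fin d,
        u z * (c z.1.succ z'.1.succ t * (q t z.2 * q t z'.2)) * u z') Gbar :=
      integrable_finset_sum _ fun z _ => I5z z
    have hQ : v0 ^ 2 * a r r ξr + 2 * (v0 * v1) * a r s (min ξr ξs) + v1 ^ 2 * a s s ξs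
        + 2 * ∑ z : Fin m × Fin d, ((v0 * B r ξr z + v1 * B s ξs z) * u z)
        + ∑ z : Fin m × Fin d, ∑ z' : Fin m × Fin d, u z * W z z' * u z'
        = ∫ t, (v0 ^ 2 * (ind ξr t * c r r t)
            + 2 * (v0 * v1) * (ind ξr t * ind ξs t * c r s t)
            + v1 ^ 2 * (ind ξs t * c s s t)
            + 2 * ∑ z : Fin m × Fin d,
                ((v0 * (ind ξr t * (c r z.1.succ t * q t z.2))
                  + v1 * (ind ξs t * (c s z.1.succ t * q t z.2))) * u z)
            + ∑ z : Fin m × Fin d, ∑ z' : Fin m × Fin d,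
                u z * (c z.1.succ z'.1.succ t * (q t z.2 * q t z'.2)) * u z') ∂Gbar := by
      have S1 : ∫ t, (v0 ^ 2 * (ind ξr t * c r r t)
            + 2 * (v0 * v1) * (ind ξr t * ind ξs t * c r s t)
            + v1 ^ 2 * (ind ξs t * c s s t)
            + 2 * ∑ z : Fin m × Fin d,
                ((v0 * (ind ξr t * (c r z.1.succ t * q t z.2))
                  + v1 * (ind ξs t * (c s z.1.succ t * q t z.2))) * u z)
            + ∑ z : Fin m × Fin d, ∑ z' : Fin m × Fin d,
                u z * (c z.1.succ z'.1.succ t * (q t z.2 * q t z'.2)) * u z') ∂Gbar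
          = (∫ t, (v0 ^ 2 * (ind ξr t * c r r t)
            + 2 * (v0 * v1) * (ind ξr t * ind ξs t * c r s t)
            + v1 ^ 2 * (ind ξs t * c s s t)
            + 2 * ∑ z : Fin m × Fin d,
                ((v0 * (ind ξr t * (c r z.1.succ t * q t z.2))
                  + v1 * (ind ξs t * (c s z.1.succ t * q t z.2))) * u z)) ∂Gbar)
            + ∫ t, (∑ z : Fin m × Fin d, ∑ z' : Fin m × Fin d,
                u z * (c z.1.succ z'.1.succ t * (q t z.2 * q t z'.2)) * u z') ∂Gbar :=
        integral_add (((I1.add I2).add I3).add I4) I5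
      have S2 : ∫ t, (v0 ^ 2 * (ind ξr t * c r r t)
            + 2 * (v0 * v1) * (ind ξr t * ind ξs t * c r s t)
            + v1 ^ 2 * (ind ξs t * c s s t)
            + 2 * ∑ z : Fin m × Fin d,
                ((v0 * (ind ξr t * (c r z.1.succ t * q t z.2))
                  + v1 * (ind ξs t * (c s z.1.succ t * q t z.2))) * u z)) ∂Gbar
          = (∫ t, (v0 ^ 2 * (ind ξr t * c r r t)
            + 2 * (v0 * v1) * (ind ξr t * ind ξs t * c r s t)
            + v1 ^ 2 * (ind ξs t * c s s t)) ∂Gbar)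
            + ∫ t, (2 * ∑ z : Fin m × Fin d,
                ((v0 * (ind ξr t * (c r z.1.succ t * q t z.2))
                  + v1 * (ind ξs t * (c s z.1.succ t * q t z.2))) * u z)) ∂Gbar :=
        integral_add ((I1.add I2).add I3) I4
      have S3 : ∫ t, (v0 ^ 2 * (ind ξr t * c r r t)
            + 2 * (v0 * v1) * (ind ξr t * ind ξs t * c r s t)
            + v1 ^ 2 * (ind ξs t * c s s t)) ∂Gbar
          = (∫ t, (v0 ^ 2 * (ind ξr t * c r r t)
            + 2 * (v0 * v1) * (ind ξr t * ind ξs t * c r s t)) ∂Gbar)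
            + ∫ t, (v1 ^ 2 * (ind ξs t * c s s t)) ∂Gbar :=
        integral_add (I1.add I2) I3
      have S4 : ∫ t, (v0 ^ 2 * (ind ξr t * c r r t)
            + 2 * (v0 * v1) * (ind ξr t * ind ξs t * c r s t)) ∂Gbar
          = (∫ t, (v0 ^ 2 * (ind ξr t * c r r t)) ∂Gbar)
            + ∫ t, (2 * (v0 * v1) * (ind ξr t * ind ξs t * c r s t)) ∂Gbar :=
        integral_add I1 I2
      have S5 : ∫ t, (2 * ∑ z : Fin m × Fin d,
            ((v0 * (ind ξr t * (c r z.1.succ t * q t z.2))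
              + v1 * (ind ξs t * (c s z.1.succ t * q t z.2))) * u z)) ∂Gbar
          = 2 * ∑ z : Fin m × Fin d, ∫ t,
              ((v0 * (ind ξr t * (c r z.1.succ t * q t z.2))
                + v1 * (ind ξs t * (c s z.1.succ t * q t z.2))) * u z) ∂Gbar := by
        rw [integral_const_mul]
        congr 1
        exact integral_finset_sum _ fun z _ => I4z z
      have S6 : ∫ t, (∑ z : Fin m × Fin d, ∑ z' : Fin m × Fin d,
            u z * (c z.1.succ z'.1.succ t * (q t z.2 * q t z'.2)) * u z') ∂Gbar
          = ∑ z : Fin m × Fin d, ∑ z' : Fin m × Fin d, ∫ t,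
              (u z * (c z.1.succ z'.1.succ t * (q t z.2 * q t z'.2)) * u z') ∂Gbar := by
        rw [integral_finset_sum _ fun z _ => I5z z]
        exact Finset.sum_congr rfl fun z _ => integral_finset_sum _ fun z' _ => I5zz z z'
      have e4 : ∀ z : Fin m × Fin d,
          ∫ t, ((v0 * (ind ξr t * (c r z.1.succ t * q t z.2))
            + v1 * (ind ξs t * (c s z.1.succ t * q t z.2))) * u z) ∂Gbar
          = (v0 * B r ξr z + v1 * B s ξs z) * u z := by
        intro z
        rw [integral_mul_const]
        congr 1
        have eadd : ∫ t, (v0 * (ind ξr t * (c r z.1.succ t * q t z.2))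
              + v1 * (ind ξs t * (c s z.1.succ t * q t z.2))) ∂Gbar
            = (∫ t, v0 * (ind ξr t * (c r z.1.succ t * q t z.2)) ∂Gbar)
              + ∫ t, v1 * (ind ξs t * (c s z.1.succ t * q t z.2)) ∂Gbar :=
          integral_add ((hintB r ξr z).const_mul v0) ((hintB s ξs z).const_mul v1)
        rw [eadd, integral_const_mul, integral_const_mul, ← hBrep, ← hBrep]
      have e5 : ∀ z z' : Fin m × Fin d,
          ∫ t, (u z * (c z.1.succ z'.1.succ t * (q t z.2 * q t z'.2)) * u z') ∂Gbar
          = u z * W z z' * u z' := by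
        intro z z'
        rw [integral_mul_const, integral_const_mul, ← hWrep]
      rw [S1, S2, S3, S4, S5, S6,
          integral_const_mul, integral_const_mul, integral_const_mul,
          Finset.sum_congr rfl fun z _ => e4 z,
          Finset.sum_congr rfl fun z (_ : z ∈ Finset.univ) =>
            Finset.sum_congr rfl fun z' _ => e5 z z',
          ← hrep r r ξr, ← hrepmin, ← hrep s s ξs]
    rw [hQ]
    apply integral_nonneg
    intro t
    have h0 : (0:ℝ) ≤ ∑ k, ∑ l, ((if k = l then hfun k t else 0) - hfun k t * hfun l t) *
        ((v0 * (if k = r then ind ξr t else 0) + v1 * (if k = s then ind ξs t else 0)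
            + ∑ z : Fin m × Fin d, (if k = z.1.succ then u z * q t z.2 else 0)) *
         (v0 * (if l = r then ind ξr t else 0) + v1 * (if l = s then ind ξs t else 0)
            + ∑ z : Fin m × Fin d, (if l = z.1.succ then u z * q t z.2 else 0))) :=
      drm_quadform_nonneg (fun k => hfun k t) (fun k => hfnn k t) (hfsum t) _
    have e := drm_ptwise (fun k l => c k l t) (fun k l => hcsymm k l t) r s
      (ind ξr t) (ind ξs t) (hind01 ξr t) (hind01 ξs t) v0 v1 u
      (fun z => q t z.2) (fun z => z.1.succ)
    exact h0.trans e.le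
  -- symmetry of W and its inverse
  have hWsymm : ∀ z z' : Fin m × Fin d, W z z' = W z' z := by
    rintro ⟨zs, zi⟩ ⟨zs', zi'⟩
    rw [hW, hW]
    congr 1; funext t
    by_cases h : zs = zs'
    · subst h; ring
    · simp only [h, if_false, Ne.symm h]; ring
  have hWT : W.transpose = W := by
    ext z z'; rw [Matrix.transpose_apply]; exact hWsymm z' z
  have hWinvT : (W⁻¹).transpose = W⁻¹ := by rw [Matrix.transpose_nonsing_inv, hWT]
  have hdotsym : ∀ v w : Fin m × Fin d → ℝ,
      dotProduct v ((W⁻¹).mulVec w) = dotProduct w ((W⁻¹).mulVec v) := by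
    intro v w
    rw [Matrix.dotProduct_mulVec, ← Matrix.mulVec_transpose, hWinvT, dotProduct_comm]
  -- conclude
  apply drm_psd2
  intro x y
  have hρr : ρ r ≠ 0 := (hρpos r).ne'
  have hρs : ρ s ≠ 0 := (hρpos s).ne'
  have hgr' : gr ≠ 0 := hgr.ne'
  have hgs' : gs ≠ 0 := hgs.ne'
  set v0 : ℝ := x / (ρ r * gr) with hv0
  set v1 : ℝ := y / (ρ s * gs) with hv1
  set bb : Fin m × Fin d → ℝ := v0 • B r ξr + v1 • B s ξs with hbb
  set uu : Fin m × Fin d → ℝ := -((W⁻¹).mulVec bb) with huu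
  have hkey := key v0 v1 uu
  have h1 : ∑ z : Fin m × Fin d, ((v0 * B r ξr z + v1 * B s ξs z) * uu z)
      = -(dotProduct bb ((W⁻¹).mulVec bb)) := by
    have ed : dotProduct bb ((W⁻¹).mulVec bb)
        = ∑ z : Fin m × Fin d, bb z * (W⁻¹).mulVec bb z := rfl
    rw [ed, ← Finset.sum_neg_distrib]
    refine Finset.sum_congr rfl fun z _ => ?_
    simp only [hbb, huu, Pi.add_apply, Pi.smul_apply, Pi.neg_apply, smul_eq_mul]
    ring
  have h2 : ∑ z : Fin m × Fin d, ∑ z' : Fin m × Fin d, uu z * W z z' * uu z'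
      = dotProduct bb ((W⁻¹).mulVec bb) := by
    have e : ∑ z : Fin m × Fin d, ∑ z' : Fin m × Fin d, uu z * W z z' * uu z'
        = dotProduct uu (W.mulVec uu) := by
      have ed : dotProduct uu (W.mulVec uu)
          = ∑ z : Fin m × Fin d, uu z * ∑ z' : Fin m × Fin d, W z z' * uu z' := rfl
      rw [ed]
      refine Finset.sum_congr rfl fun z _ => ?_
      rw [Finset.mul_sum]
      exact Finset.sum_congr rfl fun z' _ => by ring
    rw [e, huu, Matrix.mulVec_neg, dotProduct_neg, neg_dotProduct, neg_neg,
        Matrix.mulVec_mulVec, Matrix.mul_nonsing_inv W hWinv, Matrix.one_mulVec,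
        dotProduct_comm]
  have h3 : dotProduct bb ((W⁻¹).mulVec bb)
      = v0 ^ 2 * dotProduct (B r ξr) ((W⁻¹).mulVec (B r ξr))
        + 2 * (v0 * v1) * dotProduct (B r ξr) ((W⁻¹).mulVec (B s ξs))
        + v1 ^ 2 * dotProduct (B s ξs) ((W⁻¹).mulVec (B s ξs)) := by
    simp only [hbb, Matrix.mulVec_add, Matrix.mulVec_smul, add_dotProduct,
      smul_dotProduct, dotProduct_add, dotProduct_smul, smul_eq_mul]
    rw [hdotsym (B s ξs) (B r ξr)]
    ring
  rw [h1, h2, h3] at hkey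
  have hd1 : ∑ cc : Fin m × Fin d, B r ξr cc * (W⁻¹).mulVec (B r ξr) cc
      = dotProduct (B r ξr) ((W⁻¹).mulVec (B r ξr)) := rfl
  have hd2 : ∑ cc : Fin m × Fin d, B r ξr cc * (W⁻¹).mulVec (B s ξs) cc
      = dotProduct (B r ξr) ((W⁻¹).mulVec (B s ξs)) := rfl
  have hd3 : ∑ cc : Fin m × Fin d, B s ξs cc * (W⁻¹).mulVec (B s ξs) cc
      = dotProduct (B s ξs) ((W⁻¹).mulVec (B s ξs)) := rfl
  rw [hd1, hd2, hd3]
  have hgoal : (a r r ξr - dotProduct (B r ξr) ((W⁻¹).mulVec (B r ξr))) /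
        (ρ r ^ 2 * gr ^ 2) * x ^ 2
      + 2 * ((a r s (min ξr ξs) - dotProduct (B r ξr) ((W⁻¹).mulVec (B s ξs))) /
        (ρ r * ρ s * gr * gs)) * (x * y)
      + (a s s ξs - dotProduct (B s ξs) ((W⁻¹).mulVec (B s ξs))) /
        (ρ s ^ 2 * gs ^ 2) * y ^ 2
      = v0 ^ 2 * a r r ξr + 2 * (v0 * v1) * a r s (min ξr ξs) + v1 ^ 2 * a s s ξs
        + 2 * -(v0 ^ 2 * dotProduct (B r ξr) ((W⁻¹).mulVec (B r ξr))
            + 2 * (v0 * v1) * dotProduct (B r ξr) ((W⁻¹).mulVec (B s ξs))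
            + v1 ^ 2 * dotProduct (B s ξs) ((W⁻¹).mulVec (B s ξs)))
        + (v0 ^ 2 * dotProduct (B r ξr) ((W⁻¹).mulVec (B r ξr))
            + 2 * (v0 * v1) * dotProduct (B r ξr) ((W⁻¹).mulVec (B s ξs))
            + v1 ^ 2 * dotProduct (B s ξs) ((W⁻¹).mulVec (B s ξs))) := by
    rw [hv0, hv1]
    field_simp
    ring
  rw [hgoal]
  exact hkey
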